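/- Every interpolating sequence ζ for H^∞ containing at least two elements can be written as a disjoint union of two interpolating sequences ζ₁ and ζ₂ with δ(ζ_j) ≥ √(δ(ζ)) for j = 1, 2. -/

import Mathlib

open Metric

open Finset

/-- The pseudohyperbolic metric on the unit disk. -/
noncomputable def pRho (z w : ℂ) : ℝ :=
  ‖(z - w) / (1 - (starRingEnd ℂ) w * z)‖

/-- The interpolation characteristic `δ(ζ) = inf_k ∏_{j≠k} ρ(z_j, z_k)` of a sequence. -/
noncomputable def charSeq {ι : Type*} (z : ι → ℂ) : ℝ :=
  ⨅ k : ι, ∏' j : {j : ι // j ≠ k}, pRho (z j) (z k)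

open Metric Finset


lemma pRho_nonneg (z w : ℂ) : 0 ≤ pRho z w := norm_nonneg _

lemma normSq_identity (z w : ℂ) :
    Complex.normSq (1 - (starRingEnd ℂ) w * z) - Complex.normSq (z - w)
      = (1 - Complex.normSq w) * (1 - Complex.normSq z) := by
  simp [Complex.normSq_apply, Complex.sub_re, Complex.sub_im, Complex.mul_re, Complex.mul_im,
    Complex.one_re, Complex.one_im]
  ring

lemma normSq_lt_one {z : ℂ} (hz : ‖z‖ < 1) : Complex.normSq z < 1 := by
  rw [← Complex.sq_norm]; nlinarith [norm_nonneg z]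

lemma denom_pos {z w : ℂ} (hz : ‖z‖ < 1) (hw : ‖w‖ < 1) :
    0 < Complex.normSq (1 - (starRingEnd ℂ) w * z) := by
  nlinarith [normSq_identity z w, Complex.normSq_nonneg (z - w), normSq_lt_one hz, normSq_lt_one hw]

lemma pRho_le_one {z w : ℂ} (hz : ‖z‖ < 1) (hw : ‖w‖ < 1) :
    pRho z w ≤ 1 := by
  have hpos := denom_pos hz hw
  rw [pRho, norm_div, div_le_one (norm_pos_iff.mpr (Complex.normSq_pos.mp hpos))]
  have h1 : ‖z - w‖ ^ 2 ≤ ‖1 - (starRingEnd ℂ) w * z‖ ^ 2 := by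
    rw [Complex.sq_norm, Complex.sq_norm]
    nlinarith [normSq_identity z w, normSq_lt_one hz, normSq_lt_one hw]
  nlinarith [norm_nonneg (z - w), norm_nonneg (1 - (starRingEnd ℂ) w * z)]

lemma pRho_pos {z w : ℂ} (hz : ‖z‖ < 1) (hw : ‖w‖ < 1) (h : z ≠ w) :
    0 < pRho z w := by
  have hpos := denom_pos hz hw
  rw [pRho]
  exact norm_pos_iff.mpr (div_ne_zero (sub_ne_zero.mpr h) (Complex.normSq_pos.mp hpos))

lemma pRho_symm (z w : ℂ) : pRho z w = pRho w z := by
  rw [pRho, pRho, norm_div, norm_div]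
  congr 1
  · exact norm_sub_rev z w
  · have h : (starRingEnd ℂ) (1 - (starRingEnd ℂ) w * z) = 1 - (starRingEnd ℂ) z * w := by
      rw [map_sub, map_one, map_mul, Complex.conj_conj, mul_comm]
    rw [← h, Complex.norm_conj]

section Prods
variable {ι : Type*} (f : ι → ℝ)

lemma hasProd_iInf (h0 : ∀ i, 0 ≤ f i) (h1 : ∀ i, f i ≤ 1) :
    HasProd f (⨅ s : Finset ι, ∏ i ∈ s, f i) := by
  classical
  have anti : Antitone fun s : Finset ι => ∏ i ∈ s, f i := by
    intro s t hst
    calc ∏ i ∈ t, f i = (∏ i ∈ t \ s, f i) * ∏ i ∈ s, f i := (Finset.prod_sdiff hst).symm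
    _ ≤ 1 * ∏ i ∈ s, f i :=
        mul_le_mul_of_nonneg_right (Finset.prod_le_one (fun i _ => h0 i) fun i _ => h1 i)
          (Finset.prod_nonneg fun i _ => h0 i)
    _ = _ := one_mul _
  exact tendsto_atTop_ciInf anti ⟨0, by rintro x ⟨s, rfl⟩; exact Finset.prod_nonneg fun i _ => h0 i⟩

lemma mytprod_le_prod (h0 : ∀ i, 0 ≤ f i) (h1 : ∀ i, f i ≤ 1) (s : Finset ι) :
    ∏' i, f i ≤ ∏ i ∈ s, f i := by
  rw [(hasProd_iInf f h0 h1).tprod_eq]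
  exact ciInf_le ⟨0, by rintro x ⟨t, rfl⟩; exact Finset.prod_nonneg fun i _ => h0 i⟩ s

lemma myle_tprod {a : ℝ} (ha : a ≤ 1) (hs : ∀ s : Finset ι, a ≤ ∏ i ∈ s, f i) :
    a ≤ ∏' i, f i := by
  by_cases hm : Multipliable f
  · exact ge_of_tendsto' hm.hasProd hs
  · rw [tprod_eq_one_of_not_multipliable hm]; exact ha

lemma mytprod_nonneg (h0 : ∀ i, 0 ≤ f i) : 0 ≤ ∏' i, f i :=
  myle_tprod f zero_le_one fun s => Finset.prod_nonneg fun i _ => h0 i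

lemma mytprod_le_one (h0 : ∀ i, 0 ≤ f i) (h1 : ∀ i, f i ≤ 1) : ∏' i, f i ≤ 1 := by
  simpa using mytprod_le_prod f h0 h1 ∅

end Prods

lemma maxcut_aux (W : ℕ → ℕ → ℝ) (hsym : ∀ j k, W j k = W k j)
    (hpos : ∀ j k, j ≠ k → 0 < W j k) (F : Finset ℕ) :
    ∃ c : ℕ → Bool, ∀ k ∈ F,
      (∏ j ∈ F.erase k, if c j ≠ c k then W j k else 1) ≤
      ∏ j ∈ F.erase k, if c j = c k then W j k else 1 := by
  classical
  set T : Finset (ℕ × ℕ) := (F ×ˢ F).filter (fun p => p.1 ≠ p.2) with hT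
  set Φ : (ℕ → Bool) → ℝ := fun c => ∏ p ∈ T, if c p.1 = c p.2 then W p.1 p.2 else 1 with hΦ
  obtain ⟨d₀, hd₀⟩ := Finite.exists_max fun d : ({x // x ∈ F} → Bool) =>
    Φ fun n => if h : n ∈ F then d ⟨n, h⟩ else false
  set c : ℕ → Bool := fun n => if h : n ∈ F then d₀ ⟨n, h⟩ else false with hc
  have hmax : ∀ c' : ℕ → Bool, Φ c' ≤ Φ c := by
    intro c'
    have he : Φ c' = Φ fun n => if h : n ∈ F then c' n else false := by
      apply Finset.prod_congr rfl
      intro p hp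
      simp only [hT, Finset.mem_filter, Finset.mem_product] at hp
      simp only [dif_pos hp.1.1, dif_pos hp.1.2]
    rw [he]
    exact hd₀ fun x => c' x.1
  refine ⟨c, fun k hk => ?_⟩
  set c' : ℕ → Bool := Function.update c k (!(c k)) with hc'
  set B : (ℕ → Bool) → ℝ := fun b => ∏ j ∈ F.erase k, if b j = b k then W j k else 1 with hB
  set A : (ℕ → Bool) → ℝ :=
    fun b => ∏ p ∈ (T.filter fun p => ¬(p.2 = k)).filter (fun p => ¬(p.1 = k)),
      if b p.1 = b p.2 then W p.1 p.2 else 1 with hA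
  -- image descriptions
  have himg1 : T.filter (fun p => p.2 = k) = (F.erase k).image fun j => (j, k) := by
    ext ⟨a, b⟩
    simp only [hT, Finset.mem_filter, Finset.mem_product, Finset.mem_image, Finset.mem_erase,
      Prod.mk.injEq]
    constructor
    · rintro ⟨⟨⟨ha, hb⟩, hab⟩, rfl⟩; exact ⟨a, ⟨hab, ha⟩, rfl, rfl⟩
    · rintro ⟨j, ⟨hjk, hj⟩, rfl, rfl⟩; exact ⟨⟨⟨hj, hk⟩, hjk⟩, rfl⟩
  have himg2 : (T.filter fun p => ¬(p.2 = k)).filter (fun p => p.1 = k)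
      = (F.erase k).image fun j => (k, j) := by
    ext ⟨a, b⟩
    simp only [hT, Finset.mem_filter, Finset.mem_product, Finset.mem_image, Finset.mem_erase,
      Prod.mk.injEq]
    constructor
    · rintro ⟨⟨⟨⟨ha, hb⟩, hab⟩, hbk⟩, rfl⟩; exact ⟨b, ⟨hbk, hb⟩, rfl, rfl⟩
    · rintro ⟨j, ⟨hjk, hj⟩, rfl, rfl⟩; exact ⟨⟨⟨⟨hk, hj⟩, fun h => hjk h.symm⟩, hjk⟩, rfl⟩
  have hfact : ∀ b : ℕ → Bool, Φ b = B b * (B b * A b) := by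
    intro b
    rw [hΦ]
    dsimp only
    rw [← Finset.prod_filter_mul_prod_filter_not T (fun p => p.2 = k)]
    congr 1
    · rw [himg1, Finset.prod_image (by intro x _ y _ h; simpa using (Prod.mk.injEq _ _ _ _ ▸ h).1)]
    · rw [← Finset.prod_filter_mul_prod_filter_not (T.filter fun p => ¬(p.2 = k)) (fun p => p.1 = k)]
      congr 1
      rw [himg2, Finset.prod_image (by intro x _ y _ h; simpa using (Prod.mk.injEq _ _ _ _ ▸ h).2)]
      apply Finset.prod_congr rfl
      intro j hj
      rw [hsym k j]
      by_cases h : b k = b j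
      · rw [if_pos h, if_pos h.symm]
      · rw [if_neg h, if_neg fun hh => h hh.symm]
  -- A positive, B nonneg
  have hApos : ∀ b : ℕ → Bool, 0 < A b := by
    intro b
    apply Finset.prod_pos
    intro p hp
    simp only [Finset.mem_filter, hT] at hp
    have hne : p.1 ≠ p.2 := hp.1.1.2
    split
    · exact hpos _ _ hne
    · exact one_pos
  have hBnn : ∀ b : ℕ → Bool, 0 ≤ B b := by
    intro b
    apply Finset.prod_nonneg
    intro j hj
    split
    · exact (hpos j k (Finset.mem_erase.mp hj).1).le
    · exact zero_le_one
  -- A unchanged, B flips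
  have hAeq : A c' = A c := by
    apply Finset.prod_congr rfl
    intro p hp
    simp only [Finset.mem_filter] at hp
    rw [hc', Function.update_of_ne hp.2, Function.update_of_ne hp.1.2]
  have hBc' : B c' = ∏ j ∈ F.erase k, if c j ≠ c k then W j k else 1 := by
    apply Finset.prod_congr rfl
    intro j hj
    have hjk : j ≠ k := (Finset.mem_erase.mp hj).1
    rw [hc', Function.update_of_ne hjk, Function.update_self]
    cases hcj : c j <;> cases hck : c k <;> simp
  -- conclude
  have hkey := hmax c'
  rw [hfact c, hfact c', hAeq, hBc'] at hkey
  set x : ℝ := ∏ j ∈ F.erase k, if c j ≠ c k then W j k else 1 with hx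
  have hxnn : 0 ≤ x := by
    apply Finset.prod_nonneg
    intro j hj
    split
    · exact (hpos j k (Finset.mem_erase.mp hj).1).le
    · exact zero_le_one
  have h2 : x * x ≤ B c * B c := by
    have := hApos c
    have h3 : x * x * A c ≤ B c * B c * A c := by ring_nf; ring_nf at hkey; linarith
    exact le_of_mul_le_mul_right h3 this
  have := hBnn c
  nlinarith

/-- Every interpolating sequence (i.e. `δ(ζ) > 0`) with at least two elements is the
disjoint union of two interpolating subsequences `ζ₁, ζ₂` with `δ(ζ_j) ≥ √(δ(ζ))`. -/
theorem interpolating_splitting (ζ : ℕ → ℂ) (hζ : ∀ n, ζ n ∈ ball (0 : ℂ) 1)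
    (hinj : Function.Injective ζ)
    (hδ : 0 < charSeq ζ) :
    ∃ S : Set ℕ, S.Nonempty ∧ Sᶜ.Nonempty ∧
      Real.sqrt (charSeq ζ) ≤ charSeq (fun i : S => ζ i) ∧
      Real.sqrt (charSeq ζ) ≤ charSeq (fun i : ↥Sᶜ => ζ i) := by
  classical
  set δ := charSeq ζ with hδdef
  have habs : ∀ n, ‖ζ n‖ < 1 := by
    intro n
    have := hζ n
    rwa [mem_ball, Complex.dist_eq, sub_zero] at this
  set W : ℕ → ℕ → ℝ := fun j k => pRho (ζ j) (ζ k) with hWdef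
  have hW0 : ∀ j k, 0 ≤ W j k := fun j k => pRho_nonneg _ _
  have hW1 : ∀ j k, W j k ≤ 1 := fun j k => pRho_le_one (habs j) (habs k)
  have hWs : ∀ j k, W j k = W k j := fun j k => pRho_symm _ _
  have hWp : ∀ j k, j ≠ k → 0 < W j k := fun j k h =>
    pRho_pos (habs j) (habs k) fun he => h (hinj he)
  have hbdd : BddBelow (Set.range fun k : ℕ => ∏' j : {j : ℕ // j ≠ k}, pRho (ζ ↑j) (ζ k)) := by
    refine ⟨0, ?_⟩
    rintro x ⟨k, rfl⟩
    exact mytprod_nonneg _ fun j => pRho_nonneg _ _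
  -- δ ≤ 1
  have hδ1 : δ ≤ 1 := by
    have h1 : δ ≤ ∏' j : {j : ℕ // j ≠ 0}, pRho (ζ ↑j) (ζ 0) := by
      rw [hδdef, charSeq]
      exact ciInf_le hbdd 0
    exact h1.trans (mytprod_le_one _ (fun j => pRho_nonneg _ _) fun j => hW1 _ _)
  have hsqrt1 : Real.sqrt δ ≤ 1 := Real.sqrt_le_one.mpr hδ1
  -- full finite products are at least δ
  have hfull : ∀ (k : ℕ) (s : Finset ℕ), k ∉ s → δ ≤ ∏ j ∈ s, W j k := by
    intro k s hks
    have h1 : δ ≤ ∏' j : {j : ℕ // j ≠ k}, pRho (ζ ↑j) (ζ k) := by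
      rw [hδdef, charSeq]; exact ciInf_le hbdd k
    refine h1.trans ?_
    have hemb : Function.Injective fun j : {x // x ∈ s} => (⟨j.1, fun h => hks (h ▸ j.2)⟩ : {j : ℕ // j ≠ k}) := by
      intro a b hab
      have h := congrArg Subtype.val hab
      exact Subtype.ext h
    have := mytprod_le_prod (fun j : {j : ℕ // j ≠ k} => pRho (ζ ↑j) (ζ k))
      (fun j => pRho_nonneg _ _) (fun j => hW1 _ _)
      (s.attach.map ⟨_, hemb⟩)
    refine this.trans_eq ?_
    rw [Finset.prod_map]
    exact Finset.prod_attach s fun j => W j k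
  -- the closed sets for the compactness argument
  set D : Finset ℕ → Set (ℕ → Bool) := fun F =>
    {c | ∀ k ∈ F, Real.sqrt δ ≤ ∏ j ∈ (F.erase k).filter fun j => c j = c k, W j k} with hD
  have hDne : ∀ F, (D F).Nonempty := by
    intro F
    obtain ⟨c, hc⟩ := maxcut_aux W hWs hWp F
    refine ⟨c, fun k hk => ?_⟩
    have h2 := hc k hk
    set within : ℝ := ∏ j ∈ F.erase k, if c j = c k then W j k else 1 with hwi
    set cross : ℝ := ∏ j ∈ F.erase k, if c j ≠ c k then W j k else 1 with hcr
    have hwc : within * cross = ∏ j ∈ F.erase k, W j k := by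
      rw [hwi, hcr, ← Finset.prod_mul_distrib]
      apply Finset.prod_congr rfl
      intro j hj
      by_cases h : c j = c k <;> simp [h]
    have hge : δ ≤ within * cross := by
      rw [hwc]; exact hfull k _ (Finset.notMem_erase k F)
    have hwnn : 0 ≤ within := Finset.prod_nonneg fun j hj => by
      split; exacts [hW0 _ _, zero_le_one]
    have hδw : δ ≤ within * within := hge.trans (mul_le_mul_of_nonneg_left h2 hwnn)
    have : Real.sqrt δ ≤ within := by
      calc Real.sqrt δ ≤ Real.sqrt (within * within) := Real.sqrt_le_sqrt hδw
      _ = within := Real.sqrt_mul_self hwnn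
    simpa [Finset.prod_filter] using this
  have hDclosed : ∀ F, IsClosed (D F) := by
    intro F
    have he : D F = ⋂ k ∈ F,
        {c : ℕ → Bool | Real.sqrt δ ≤ ∏ j ∈ F.erase k, if c j = c k then W j k else 1} := by
      ext c
      simp [hD, Finset.prod_filter, Set.mem_iInter]
    rw [he]
    refine isClosed_biInter fun k hk => isClosed_le continuous_const ?_
    apply continuous_finset_prod
    intro j hj
    have hcont : Continuous fun b : Bool × Bool => if b.1 = b.2 then W j k else (1 : ℝ) :=
      continuous_of_discreteTopology
    have hre : (fun cc : ℕ → Bool => if cc j = cc k then W j k else (1 : ℝ)) =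
        (fun b : Bool × Bool => if b.1 = b.2 then W j k else 1) ∘ fun cc => (cc j, cc k) := rfl
    rw [hre]
    exact hcont.comp ((continuous_apply j).prodMk (continuous_apply k))
  have hDmono : ∀ {F F' : Finset ℕ}, F ⊆ F' → D F' ⊆ D F := by
    intro F F' hFF c hc k hk
    refine (hc k (hFF hk)).trans ?_
    have hsub : (F.erase k).filter (fun j => c j = c k) ⊆
        (F'.erase k).filter fun j => c j = c k :=
      Finset.filter_subset_filter _ (Finset.erase_subset_erase k hFF)
    calc ∏ j ∈ (F'.erase k).filter (fun j => c j = c k), W j k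
        = (∏ j ∈ ((F'.erase k).filter fun j => c j = c k) \
            ((F.erase k).filter fun j => c j = c k), W j k) *
          ∏ j ∈ (F.erase k).filter (fun j => c j = c k), W j k := (Finset.prod_sdiff hsub).symm
      _ ≤ 1 * ∏ j ∈ (F.erase k).filter (fun j => c j = c k), W j k :=
          mul_le_mul_of_nonneg_right
            (Finset.prod_le_one (fun i _ => hW0 _ _) fun i _ => hW1 _ _)
            (Finset.prod_nonneg fun i _ => hW0 _ _)
      _ = _ := one_mul _
  have hDdir : Directed (· ⊇ ·) D := fun F F' =>
    ⟨F ∪ F', hDmono Finset.subset_union_left, hDmono Finset.subset_union_right⟩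
  obtain ⟨c, hc⟩ := IsCompact.nonempty_iInter_of_directed_nonempty_isCompact_isClosed D hDdir hDne
    (fun F => (hDclosed F).isCompact) hDclosed
  simp only [Set.mem_iInter] at hc
  -- the key combinatorial property of c
  have hP : ∀ (k : ℕ) (J : Finset ℕ), k ∉ J → (∀ j ∈ J, c j = c k) →
      Real.sqrt δ ≤ ∏ j ∈ J, W j k := by
    intro k J hkJ hJc
    have h1 := hc (insert k J) k (Finset.mem_insert_self k J)
    rwa [Finset.erase_insert hkJ, Finset.filter_true_of_mem hJc] at h1
  -- bound for subsequences
  have key : ∀ S : Set ℕ, S.Nonempty →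
      (∀ k ∈ S, ∀ J : Finset ℕ, k ∉ J → (∀ j ∈ J, j ∈ S) → Real.sqrt δ ≤ ∏ j ∈ J, W j k) →
      Real.sqrt δ ≤ charSeq fun i : S => ζ i := by
    intro S hSne hS
    haveI : Nonempty S := hSne.to_subtype
    rw [charSeq]
    apply le_ciInf
    intro k
    apply myle_tprod _ hsqrt1
    intro t
    set g : {j : S // j ≠ k} → ℕ := fun j => (j.1 : ℕ) with hg
    have hinj' : ∀ a ∈ t, ∀ b ∈ t, g a = g b → a = b := by
      intro a _ b _ h
      exact Subtype.ext (Subtype.ext h)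
    have heq : ∏ i ∈ t.image g, W i (k : ℕ) = ∏ j ∈ t, W (g j) (k : ℕ) :=
      Finset.prod_image hinj'
    show Real.sqrt δ ≤ ∏ j ∈ t, W (g j) (k : ℕ)
    rw [← heq]
    apply hS (k : ℕ) k.2
    · intro hmem
      simp only [Finset.mem_image] at hmem
      obtain ⟨j, -, hj⟩ := hmem
      exact j.2 (Subtype.ext hj)
    · intro i hi
      simp only [Finset.mem_image] at hi
      obtain ⟨j, -, rfl⟩ := hi
      exact j.1.2
  -- case split on whether c is constant
  by_cases hconst : ∀ m n : ℕ, c m = c n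
  · refine ⟨{0}, ⟨0, rfl⟩, ⟨1, by simp⟩, ?_, ?_⟩
    · have hne : Nonempty (({0} : Set ℕ)) := ⟨⟨0, rfl⟩⟩
      rw [charSeq]
      apply le_ciInf
      intro k
      haveI : IsEmpty {j : ({0} : Set ℕ) // j ≠ k} := by
        refine ⟨fun j => j.2 (Subtype.ext ?_)⟩
        have h1 : ((j.1 : Set.Elem {0}) : ℕ) = 0 := j.1.2
        have h2 : ((k : Set.Elem {0}) : ℕ) = 0 := k.2
        exact h1.trans h2.symm
      rw [tprod_empty]
      exact hsqrt1
    · apply key _ ⟨1, by simp⟩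
      intro k hk J hkJ hJS
      exact hP k J hkJ fun j hj => hconst j k
  · push_neg at hconst
    obtain ⟨m, n, hmn⟩ := hconst
    refine ⟨{i | c i = c m}, ⟨m, rfl⟩, ⟨n, fun h => hmn h.symm⟩, ?_, ?_⟩
    · refine key {i | c i = c m} ⟨m, rfl⟩ ?_
      intro k hk J hkJ hJS
      exact hP k J hkJ fun j hj => (hJS j hj).trans hk.symm
    · refine key ({i | c i = c m}ᶜ) ⟨n, fun h => hmn h.symm⟩ ?_
      intro k hk J hkJ hJS
      refine hP k J hkJ fun j hj => ?_
      have h1 : ¬(c j = c m) := hJS j hj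
      have h2 : ¬(c k = c m) := hk
      revert h1 h2
      cases c j <;> cases c k <;> cases c m <;> simp
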